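/- For every set X ⊆ ℝ of Lebesgue measure zero there exists a sequence of functions (g_n)_{n∈ℕ} (satisfying the standard conditions: each g_n : (0,1) → (0,1) increasing, the sequence nonincreasing in n, lim_{x→0⁺} g_n(x)=0 for each n, and ∑_n g_n(x) convergent for small x) such that X is (g_n)-microscopic. -/

import Mathlib

open Set MeasureTheory

/-- `M` can be covered by a sequence of intervals whose `k`-th length is at most `len k`. -/
def IntervalCover (M : Set ℝ) (len : ℕ → ℝ) : Prop :=
  ∃ a b : ℕ → ℝ, M ⊆ ⋃ k, Set.Icc (a k) (b k) ∧ ∀ k, b k - a k ≤ len k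

def Microscopic (M : Set ℝ) : Prop :=
  ∀ ε : ℝ, 0 < ε → ε < 1 → IntervalCover M (fun k => ε ^ k)

def Nanoscopic (M : Set ℝ) : Prop :=
  ∀ ε : ℝ, 0 < ε → ε < 1 → IntervalCover M (fun k => ε ^ (2 ^ k))

def Picoscopic (M : Set ℝ) : Prop :=
  ∀ ε : ℝ, 0 < ε → ε < 1 → IntervalCover M (fun k => ε ^ (Nat.factorial (k + 1)))

def FnMicroscopic (f : ℕ → ℝ → ℝ) (M : Set ℝ) : Prop :=
  ∀ ε : ℝ, 0 < ε → ε < 1 → IntervalCover M (fun k => f k ε)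

/-- The standard conditions on a sequence of functions generating generalized microscopic sets. -/
def StandardConditions (f : ℕ → ℝ → ℝ) : Prop :=
  (∀ n, ∀ x ∈ Set.Ioo (0:ℝ) 1, f n x ∈ Set.Ioo (0:ℝ) 1) ∧
  (∀ n, StrictMonoOn (f n) (Set.Ioo (0:ℝ) 1)) ∧
  (∀ n, ∀ x ∈ Set.Ioo (0:ℝ) 1, f (n + 1) x ≤ f n x) ∧
  (∀ n, Filter.Tendsto (f n) (nhdsWithin 0 (Set.Ioi 0)) (nhds 0)) ∧
  (∃ x₀ : ℝ, 0 < x₀ ∧ ∀ x : ℝ, 0 < x → x < x₀ → Summable fun n => f n x)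

def StrongMeasureZero (B : Set ℝ) : Prop :=
  ∀ ε : ℕ → ℝ, (∀ k, 0 < ε k) → IntervalCover B ε

def IsFsigma (F : Set ℝ) : Prop :=
  ∃ C : ℕ → Set ℝ, (∀ n, IsClosed (C n)) ∧ F = ⋃ n, C n

/-- `A` can be covered by an `Fσ` set which is `(f n)`-microscopic. -/
def MicroStar (f : ℕ → ℝ → ℝ) (A : Set ℝ) : Prop :=
  ∃ F : Set ℝ, IsFsigma F ∧ FnMicroscopic f F ∧ A ⊆ F

/-- `m`-`(f n)`-microscopic sets. -/
def MFnMicroscopic (f : ℕ → ℝ → ℝ) (m : ℕ) (M : Set ℝ) : Prop :=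
  ∀ ε : ℝ, 0 < ε → ε < 1 → ∃ a b : ℕ → ℝ, M ⊆ ⋃ k, Set.Icc (a k) (b k) ∧
    ∀ k : ℕ, ∀ j < m, b (m * k + j) - a (m * k + j) ≤ f k ε

def TwoNanoscopic (M : Set ℝ) : Prop :=
  MFnMicroscopic (fun k ε => ε ^ (2 ^ k)) 2 M

open scoped ENNReal in
lemma exists_summable_cover (X : Set ℝ) (hX : volume X = 0) (δ : ℝ) (hδ : 0 < δ) :
    ∃ a b : ℕ → ℝ, (∀ k, a k ≤ b k) ∧ X ⊆ ⋃ k, Icc (a k) (b k) ∧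
      Summable (fun k => b k - a k) ∧ ∑' k, (b k - a k) ≤ δ := by
  have houter : StieltjesFunction.id.outer X = 0 := by
    rw [Real.volume_eq_stieltjes_id, StieltjesFunction.measure] at hX; exact hX
  have h1 : StieltjesFunction.id.outer X < ENNReal.ofReal (δ/2) := by
    rw [houter]; exact ENNReal.ofReal_pos.2 (by linarith)
  rw [StieltjesFunction.outer, MeasureTheory.OuterMeasure.ofFunction_apply] at h1
  rw [iInf_lt_iff] at h1
  obtain ⟨t, ht⟩ := h1
  rw [iInf_lt_iff] at ht
  obtain ⟨hcov, hsum⟩ := ht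
  -- for each n, choose an Ioc interval containing t n with controlled length
  have hfin : ∀ n, StieltjesFunction.id.length (t n) ≠ ⊤ := fun n =>
    ((ENNReal.le_tsum n).trans_lt (hsum.trans ENNReal.ofReal_lt_top)).ne
  have key : ∀ n : ℕ, ∃ p : ℝ × ℝ, p.1 ≤ p.2 ∧ t n ⊆ Ioc p.1 p.2 ∧
      ENNReal.ofReal (p.2 - p.1) ≤ StieltjesFunction.id.length (t n)
        + ENNReal.ofReal (δ/4 * (1/2)^n) := by
    intro n
    have hlt : StieltjesFunction.id.length (t n) <
        StieltjesFunction.id.length (t n) + ENNReal.ofReal (δ/4 * (1/2)^n) :=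
      ENNReal.lt_add_right (hfin n) (ENNReal.ofReal_pos.2 (by positivity)).ne'
    conv_lhs at hlt => rw [StieltjesFunction.length]
    rw [if_neg (not_isEmpty_of_nonempty ℝ)] at hlt
    rw [iInf_lt_iff] at hlt
    obtain ⟨a, ha⟩ := hlt
    rw [iInf_lt_iff] at ha
    obtain ⟨b, hb⟩ := ha
    rw [iInf_lt_iff] at hb
    obtain ⟨hsub, hlen⟩ := hb
    replace hsub : t n ⊆ Ioc a b := fun x hx => hsub ⟨hx, not_isBot x⟩
    simp only [StieltjesFunction.id_apply] at hlen
    refine ⟨(a, max a b), le_max_left _ _, hsub.trans ?_, ?_⟩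
    · exact Ioc_subset_Ioc le_rfl (le_max_right _ _)
    · rcases le_total a b with h | h
      · simpa [max_eq_right h] using hlen.le
      · simp only [max_eq_left h, sub_self, ENNReal.ofReal_zero]
        exact zero_le
  choose p hp1 hp2 hp3 using key
  set a : ℕ → ℝ := fun n => (p n).1 with ha
  set b : ℕ → ℝ := fun n => (p n).2 with hb
  have hsum2 : ∑' n, ENNReal.ofReal (b n - a n) ≤ ENNReal.ofReal δ := by
    calc ∑' n, ENNReal.ofReal (b n - a n)
        ≤ ∑' n, (StieltjesFunction.id.length (t n) + ENNReal.ofReal (δ/4 * (1/2)^n)) :=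
          ENNReal.tsum_le_tsum hp3
      _ = (∑' n, StieltjesFunction.id.length (t n)) + ∑' n, ENNReal.ofReal (δ/4 * (1/2)^n) :=
          ENNReal.tsum_add
      _ ≤ ENNReal.ofReal (δ/2) + ENNReal.ofReal (δ/2) := by
          refine add_le_add hsum.le ?_
          rw [← ENNReal.ofReal_tsum_of_nonneg (fun n => by positivity)
            (summable_geometric_two.mul_left (δ/4))]
          apply ENNReal.ofReal_le_ofReal
          rw [tsum_mul_left, tsum_geometric_two]
          linarith
      _ = ENNReal.ofReal δ := by
          rw [← ENNReal.ofReal_add (by linarith) (by linarith)]; norm_num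
  have hne : ∑' n, ENNReal.ofReal (b n - a n) ≠ ⊤ :=
    ne_top_of_le_ne_top ENNReal.ofReal_ne_top hsum2
  have hSummable : Summable (fun n => b n - a n) := by
    have := ENNReal.summable_toReal hne
    convert this using 2 with n
    rw [ENNReal.toReal_ofReal (by linarith [hp1 n])]
  refine ⟨a, b, hp1, ?_, hSummable, ?_⟩
  · refine hcov.trans (iUnion_mono fun n => (hp2 n).trans ?_)
    exact Ioc_subset_Icc_self
  · have : ∑' n, (b n - a n) = (∑' n, ENNReal.ofReal (b n - a n)).toReal := by
      rw [ENNReal.tsum_toReal_eq (fun n => ENNReal.ofReal_ne_top)]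
      exact tsum_congr fun n => (ENNReal.toReal_ofReal (by linarith [hp1 n])).symm
    rw [this]
    calc (∑' n, ENNReal.ofReal (b n - a n)).toReal ≤ (ENNReal.ofReal δ).toReal :=
          ENNReal.toReal_mono ENNReal.ofReal_ne_top hsum2
      _ = δ := ENNReal.toReal_ofReal hδ.le

open scoped ENNReal in
lemma sorted_cover (X : Set ℝ) (hX : volume X = 0) (δ : ℝ) (hδ : 0 < δ) :
    ∃ c : ℕ → ℝ, (∀ k, 0 < c k) ∧ Antitone c ∧ Summable c ∧ (∑' k, c k) ≤ 16*δ ∧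
      IntervalCover X c := by
  classical
  obtain ⟨a, b, hab, hcov, hsml, htsum⟩ := exists_summable_cover X hX δ hδ
  set ℓ : ℕ → ℝ := fun k => b k - a k with hℓdef
  have hℓ0 : ∀ k, 0 ≤ ℓ k := fun k => sub_nonneg.2 (hab k)
  have hℓδ : ∀ k, ℓ k ≤ δ := fun k => le_trans (Summable.le_tsum hsml k (fun j _ => hℓ0 j)) htsum
  -- size class of interval k
  set rad : ℕ → ℕ := fun k => Nat.findGreatest (fun r => ℓ k ≤ δ / 2^r) k with hraddef
  have hrad_spec : ∀ k, ℓ k ≤ δ / 2^(rad k) := fun k =>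
    Nat.findGreatest_spec (P := fun r => ℓ k ≤ δ / 2^r) (Nat.zero_le k) (by simpa using hℓδ k)
  have hrad_gt : ∀ k, rad k < k → δ / 2^(rad k + 1) < ℓ k := by
    intro k hk
    have := Nat.findGreatest_is_greatest (P := fun r => ℓ k ≤ δ / 2^r) (n := k)
      (Nat.lt_succ_self _) hk
    exact lt_of_not_ge this
  -- each class is finite
  have hfin : ∀ r, {k | rad k = r}.Finite := by
    intro r
    have h0 : Filter.Tendsto ℓ Filter.atTop (nhds 0) := hsml.tendsto_atTop_zero
    have hpos : (0:ℝ) < δ / 2^(r+1) := by positivity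
    obtain ⟨N, hN⟩ := (h0.eventually (gt_mem_nhds hpos)).exists_forall_of_atTop
    apply Set.Finite.subset (Set.finite_Iio (max N (r+1)))
    intro k hk
    simp only [Set.mem_setOf_eq] at hk
    by_contra hge
    simp only [Set.mem_Iio, not_lt] at hge
    have h1 : N ≤ k := le_trans (le_max_left _ _) hge
    have h2 : r + 1 ≤ k := le_trans (le_max_right _ _) hge
    have := hrad_gt k (by omega)
    rw [hk] at this
    exact absurd (hN k h1) (not_lt.2 this.le)
  set T : ℕ → Finset ℕ := fun r => (hfin r).toFinset with hTdef
  have hTmem : ∀ r k, k ∈ T r ↔ rad k = r := by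
    intro r k; simp [hTdef]
  set M : ℕ → ℕ := fun r => (T r).card with hMdef
  set C : ℕ → ℕ := fun r => ∑ t ∈ Finset.range r, (M t + 1) with hCdef
  have hCsucc : ∀ r, C (r+1) = C r + (M r + 1) := by
    intro r; simp [hCdef, Finset.sum_range_succ]
  have hCmono : StrictMono C :=
    strictMono_nat_of_lt_succ (fun r => by rw [hCsucc]; omega)
  have hCr : ∀ r, r ≤ C r := by
    intro r; induction r with
    | zero => omega
    | succ n ih => rw [hCsucc]; omega
  set R : ℕ → ℕ := fun j => Nat.findGreatest (fun r => C r ≤ j) j with hRdef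
  have hR_block : ∀ n j, C n ≤ j → j < C (n+1) → R j = n := by
    intro n j h1 h2
    have hub : R j ≤ n := by
      by_contra h
      push_neg at h
      have hle : C (R j) ≤ j := by
        apply Nat.findGreatest_spec (P := fun r => C r ≤ j) (m := 0) (Nat.zero_le j)
        simp [hCdef]
      have : C (n+1) ≤ C (R j) := hCmono.monotone h
      omega
    have hlb : n ≤ R j := Nat.le_findGreatest (le_trans (hCr n) h1) h1
    omega
  set c : ℕ → ℝ := fun j => δ / 2^(R j) with hcdef
  have hcpos : ∀ j, 0 < c j := fun j => by positivity
  have hcanti : Antitone c := by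
    intro j j' hjj'
    have hR : R j ≤ R j' := Nat.findGreatest_mono (fun r hr => le_trans hr hjj') hjj'
    exact div_le_div_of_nonneg_left hδ.le (by positivity) (pow_le_pow_right₀ one_le_two hR)
  -- the slot map
  set φ : ℕ → ℕ := fun k => C (rad k) + 1 +
      ((Finset.range k).filter (fun k' => rad k' = rad k)).card with hφdef
  have hφ_card : ∀ k, ((Finset.range k).filter (fun k' => rad k' = rad k)).card < M (rad k) := by
    intro k
    apply Finset.card_lt_card
    rw [Finset.ssubset_iff_of_subset]
    · exact ⟨k, (hTmem _ k).2 rfl, by simp⟩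
    · intro x hx
      simp only [Finset.mem_filter, Finset.mem_range] at hx
      exact (hTmem _ x).2 hx.2
  have hφ_lt : ∀ k, φ k < C (rad k + 1) := by
    intro k
    have := hφ_card k
    rw [hCsucc]
    simp only [hφdef]
    omega
  have hφ_gt : ∀ k, C (rad k) < φ k := fun k => by simp [hφdef]; omega
  have hRφ : ∀ k, R (φ k) = rad k := fun k => hR_block _ _ (hφ_gt k).le (hφ_lt k)
  have hφinj : Function.Injective φ := by
    intro k k' h
    have hradeq : rad k = rad k' := by
      by_contra hne
      rcases Nat.lt_or_ge (rad k) (rad k') with hlt | hge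
      · have h1 : φ k < C (rad k + 1) := hφ_lt k
        have h2 : C (rad k + 1) ≤ C (rad k') := hCmono.monotone hlt
        have h3 : C (rad k') < φ k' := hφ_gt k'
        omega
      · have hlt : rad k' < rad k := by omega
        have h1 : φ k' < C (rad k' + 1) := hφ_lt k'
        have h2 : C (rad k' + 1) ≤ C (rad k) := hCmono.monotone hlt
        have h3 : C (rad k) < φ k := hφ_gt k
        omega
    -- same class: compare counts
    simp only [hφdef] at h
    simp only [← hradeq] at h
    rcases lt_trichotomy k k' with hlt | heq | hgt
    · exfalso
      have hss : (Finset.range k).filter (fun j => rad j = rad k) ⊂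
          (Finset.range k').filter (fun j => rad j = rad k) := by
        rw [Finset.ssubset_iff_of_subset]
        · exact ⟨k, by simp [Finset.mem_filter, hlt], by simp⟩
        · exact Finset.filter_subset_filter _ (Finset.range_subset_range.2 hlt.le)
      have hcl := Finset.card_lt_card hss
      omega
    · exact heq
    · exfalso
      have hss : (Finset.range k').filter (fun j => rad j = rad k) ⊂
          (Finset.range k).filter (fun j => rad j = rad k) := by
        rw [Finset.ssubset_iff_of_subset]
        · exact ⟨k', by simp [Finset.mem_filter, hgt, hradeq], by simp⟩
        · exact Finset.filter_subset_filter _ (Finset.range_subset_range.2 hgt.le)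
      have hcl := Finset.card_lt_card hss
      omega
  -- lengths fit in slots
  have hfit : ∀ k, ℓ k ≤ c (φ k) := by
    intro k
    rw [hcdef]
    simp only [hRφ k]
    exact hrad_spec k
  -- block sums
  have hblocksum : ∀ n, ∑ j ∈ Finset.range (C n), c j =
      ∑ r ∈ Finset.range n, ((M r + 1 : ℕ) : ℝ) * (δ / 2^r) := by
    intro n
    induction n with
    | zero => simp [hCdef]
    | succ n ih =>
      rw [Finset.sum_range_succ, ← ih]
      rw [Finset.range_eq_Ico,
        ← Finset.sum_Ico_consecutive _ (Nat.zero_le (C n)) (hCmono.monotone (Nat.le_succ n))]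
      congr 1
      · rw [Finset.range_eq_Ico]
      have hval : ∀ j ∈ Finset.Ico (C n) (C (n+1)), c j = δ / 2^n := by
        intro j hj
        rw [Finset.mem_Ico] at hj
        rw [hcdef]
        simp only [hR_block n j hj.1 hj.2]
      rw [Finset.sum_congr rfl hval, Finset.sum_const, Nat.card_Ico, hCsucc]
      have hc2 : C n + (M n + 1) - C n = M n + 1 := by omega
      rw [hc2, nsmul_eq_mul]
  -- bounding the block sums
  have hTdisj : ∀ r r', r ≠ r' → Disjoint (T r) (T r') := by
    intro r r' hne
    rw [Finset.disjoint_left]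
    intro x hx hx'
    rw [hTmem] at hx hx'
    omega
  have hMbound : ∀ r, (M r : ℝ) * (δ / 2^r) ≤
      ((r:ℝ) + 1) * (δ / 2^r) + 2 * ∑ k ∈ T r, ℓ k := by
    intro r
    have hsplit : M r = ((T r).filter (fun k => k < r + 1)).card +
        ((T r).filter (fun k => ¬ k < r + 1)).card := by
      rw [hMdef]; exact (Finset.card_filter_add_card_filter_not _).symm
    have h1 : ((T r).filter (fun k => k < r + 1)).card ≤ r + 1 := by
      calc ((T r).filter (fun k => k < r + 1)).card
          ≤ (Finset.range (r+1)).card := by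
            apply Finset.card_le_card
            intro x hx
            simp only [Finset.mem_filter] at hx
            simp [hx.2]
        _ = r + 1 := Finset.card_range _
    have h2 : (((T r).filter (fun k => ¬ k < r + 1)).card : ℝ) * (δ / 2^r) ≤
        2 * ∑ k ∈ (T r).filter (fun k => ¬ k < r + 1), ℓ k := by
      have hterm : ∀ k ∈ (T r).filter (fun k => ¬ k < r + 1), δ / 2^r ≤ 2 * ℓ k := by
        intro k hk
        simp only [Finset.mem_filter, not_lt] at hk
        have hrk : rad k = r := (hTmem r k).1 hk.1
        have hlt : δ / 2^(rad k + 1) < ℓ k := hrad_gt k (by omega)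
        rw [hrk] at hlt
        have h2r : δ / 2^r = 2 * (δ / 2^(r+1)) := by rw [pow_succ]; ring
        linarith
      calc (((T r).filter (fun k => ¬ k < r + 1)).card : ℝ) * (δ / 2^r)
          = ((T r).filter (fun k => ¬ k < r + 1)).card • (δ / 2^r) := (nsmul_eq_mul _ _).symm
        _ ≤ ∑ k ∈ (T r).filter (fun k => ¬ k < r + 1), 2 * ℓ k :=
            Finset.card_nsmul_le_sum _ _ _ hterm
        _ = 2 * ∑ k ∈ (T r).filter (fun k => ¬ k < r + 1), ℓ k := (Finset.mul_sum _ _ _).symm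
    have h3 : ∑ k ∈ (T r).filter (fun k => ¬ k < r + 1), ℓ k ≤ ∑ k ∈ T r, ℓ k := by
      apply Finset.sum_le_sum_of_subset_of_nonneg (Finset.filter_subset _ _)
      intro k _ _; exact hℓ0 k
    have hv : (0:ℝ) < δ / 2^r := by positivity
    have hc1 : (((T r).filter (fun k => k < r + 1)).card : ℝ) ≤ (r:ℝ) + 1 := by
      exact_mod_cast h1
    have hcast : (M r : ℝ) = (((T r).filter (fun k => k < r + 1)).card : ℝ) +
        (((T r).filter (fun k => ¬ k < r + 1)).card : ℝ) := by exact_mod_cast hsplit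
    nlinarith
  -- geometric bounds
  have hgeo1 : ∀ n, ∑ r ∈ Finset.range n, (δ / 2^r) ≤ 2*δ := by
    intro n
    have hdiv : ∀ r : ℕ, δ / 2^r = δ * (1/2:ℝ)^r := by
      intro r; rw [div_eq_mul_inv, ← inv_pow, one_div]
    calc ∑ r ∈ Finset.range n, (δ / 2^r) = δ * ∑ r ∈ Finset.range n, (1/2:ℝ)^r := by
          rw [Finset.mul_sum]; exact Finset.sum_congr rfl (fun r _ => hdiv r)
      _ ≤ δ * 2 := by
          have := sum_geometric_two_le n
          nlinarith
      _ = 2*δ := by ring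
  have hpow : ∀ r : ℕ, ((r:ℝ)+1) ≤ 2*(3/2:ℝ)^r := by
    intro r
    induction r with
    | zero => norm_num
    | succ n ih =>
      have h1 : (1:ℝ) ≤ (3/2:ℝ)^n := one_le_pow₀ (by norm_num)
      have h2 : (2:ℝ)*(3/2)^(n+1) = 3*(3/2)^n := by rw [pow_succ]; ring
      push_cast
      rw [h2]
      push_cast at ih
      linarith
  have hgeo2 : ∀ n, ∑ r ∈ Finset.range n, ((r:ℝ)+1) * (δ / 2^r) ≤ 8*δ := by
    intro n
    have hterm : ∀ r : ℕ, ((r:ℝ)+1) * (δ / 2^r) ≤ 2*δ*(3/4:ℝ)^r := by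
      intro r
      have hv : (0:ℝ) ≤ δ / 2^r := by positivity
      have hdiv : δ / 2^r = δ * (1/2:ℝ)^r := by
        rw [div_eq_mul_inv, ← inv_pow, one_div]
      have hmp : (3/2:ℝ)^r * (1/2:ℝ)^r = (3/4:ℝ)^r := by rw [← mul_pow]; norm_num
      calc ((r:ℝ)+1) * (δ / 2^r) ≤ (2*(3/2:ℝ)^r) * (δ / 2^r) :=
            mul_le_mul_of_nonneg_right (hpow r) hv
        _ = 2*δ*((3/2:ℝ)^r * (1/2:ℝ)^r) := by rw [hdiv]; ring
        _ = 2*δ*(3/4:ℝ)^r := by rw [hmp]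
    calc ∑ r ∈ Finset.range n, ((r:ℝ)+1) * (δ / 2^r)
        ≤ ∑ r ∈ Finset.range n, 2*δ*(3/4:ℝ)^r := Finset.sum_le_sum (fun r _ => hterm r)
      _ = 2*δ * ∑ r ∈ Finset.range n, (3/4:ℝ)^r := by rw [Finset.mul_sum]
      _ ≤ 2*δ * 4 := by
          have hs : ∑ r ∈ Finset.range n, (3/4:ℝ)^r ≤ 4 := by
            have h1 : ∑ r ∈ Finset.range n, (3/4:ℝ)^r ≤ ∑' r : ℕ, (3/4:ℝ)^r :=
              Summable.sum_le_tsum _ (fun r _ => by positivity)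
                (summable_geometric_of_lt_one (by norm_num) (by norm_num))
            rw [tsum_geometric_of_lt_one (by norm_num) (by norm_num)] at h1
            norm_num at h1
            exact h1
          nlinarith
      _ = 8*δ := by ring
  have hpartial : ∀ n, ∑ j ∈ Finset.range n, c j ≤ 16*δ := by
    intro n
    have h1 : ∑ j ∈ Finset.range n, c j ≤ ∑ j ∈ Finset.range (C n), c j :=
      Finset.sum_le_sum_of_subset_of_nonneg (Finset.range_subset_range.2 (hCr n))
        (fun j _ _ => (hcpos j).le)
    rw [hblocksum n] at h1
    have h2 : ∑ r ∈ Finset.range n, ((M r + 1 : ℕ):ℝ) * (δ / 2^r) =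
        ∑ r ∈ Finset.range n, ((M r : ℝ) * (δ / 2^r)) + ∑ r ∈ Finset.range n, (δ / 2^r) := by
      calc ∑ r ∈ Finset.range n, ((M r + 1 : ℕ):ℝ) * (δ / 2^r)
          = ∑ r ∈ Finset.range n, ((M r : ℝ) * (δ / 2^r) + δ / 2^r) :=
            Finset.sum_congr rfl (fun r _ => by push_cast; ring)
        _ = _ := Finset.sum_add_distrib
    have h3 : ∑ r ∈ Finset.range n, ((M r : ℝ) * (δ / 2^r)) ≤
        ∑ r ∈ Finset.range n, (((r:ℝ)+1) * (δ / 2^r)) +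
          2 * ∑ r ∈ Finset.range n, (∑ k ∈ T r, ℓ k) := by
      calc ∑ r ∈ Finset.range n, ((M r : ℝ) * (δ / 2^r))
          ≤ ∑ r ∈ Finset.range n, (((r:ℝ)+1) * (δ / 2^r) + 2 * ∑ k ∈ T r, ℓ k) :=
            Finset.sum_le_sum (fun r _ => hMbound r)
        _ = ∑ r ∈ Finset.range n, (((r:ℝ)+1) * (δ / 2^r)) +
            2 * ∑ r ∈ Finset.range n, (∑ k ∈ T r, ℓ k) := by
            rw [Finset.sum_add_distrib, Finset.mul_sum]
    have h4 : ∑ r ∈ Finset.range n, (∑ k ∈ T r, ℓ k) ≤ δ := by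
      rw [← Finset.sum_biUnion (fun r _ r' _ hne => hTdisj r r' hne)]
      exact le_trans (Summable.sum_le_tsum _ (fun k _ => hℓ0 k) hsml) htsum
    have h5 := hgeo1 n
    have h6 := hgeo2 n
    linarith
  have hcsum : Summable c := summable_of_sum_range_le (fun j => (hcpos j).le) hpartial
  have hctsum : (∑' k, c k) ≤ 16*δ := Summable.tsum_le_of_sum_range_le hcsum hpartial
  refine ⟨c, hcpos, hcanti, hcsum, hctsum, ?_⟩
  refine ⟨fun j => if h : ∃ k, φ k = j then a h.choose else 1,
    fun j => if h : ∃ k, φ k = j then b h.choose else 0, ?_, ?_⟩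
  · intro x hx
    obtain ⟨_, ⟨k, rfl⟩, hk⟩ := hcov hx
    refine mem_iUnion.2 ⟨φ k, ?_⟩
    have hex : ∃ k', φ k' = φ k := ⟨k, rfl⟩
    have heq : hex.choose = k := hφinj hex.choose_spec
    simp only [dif_pos hex, heq]
    exact hk
  · intro j
    by_cases h : ∃ k, φ k = j
    · simp only [dif_pos h]
      have hh := hfit h.choose
      rw [h.choose_spec] at hh
      exact hh
    · simp only [dif_neg h]
      have := hcpos j
      linarith

theorem stmt4 (X : Set ℝ) (hX : volume X = 0) :
    ∃ g : ℕ → ℝ → ℝ, StandardConditions g ∧ FnMicroscopic g X := by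
  -- choose a sorted cover at every scale
  choose cs hpos hanti hsm htsum hcover using
    fun m : ℕ => sorted_cover X hX ((1/2:ℝ)^(m+6)) (by positivity)
  have hts : ∀ m, (∑' k, cs m k) ≤ (1/2:ℝ)^(m+2) := by
    intro m
    refine (htsum m).trans (le_of_eq ?_)
    rw [show m+6 = (m+2)+4 by omega, pow_add]
    ring
  have hcs_le : ∀ m n, cs m n ≤ (1/2:ℝ)^(m+2) := fun m n =>
    le_trans (Summable.le_tsum (hsm m) n (fun j _ => (hpos m j).le)) (hts m)
  -- tail sums
  set d : ℕ → ℕ → ℝ := fun m n => ∑' j, cs (m+j) n with hddef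
  have hd_smj : ∀ m n, Summable (fun j => cs (m+j) n) := by
    intro m n
    apply Summable.of_nonneg_of_le (fun j => (hpos _ n).le) (fun j => hcs_le (m+j) n)
    have : (fun j : ℕ => (1/2:ℝ)^(m+j+2)) = fun j => (1/2:ℝ)^(m+2) * (1/2:ℝ)^j := by
      funext j; rw [← pow_add]; ring_nf
    rw [this]
    exact (summable_geometric_of_lt_one (by norm_num) (by norm_num)).mul_left _
  have hd_le : ∀ m n, d m n ≤ (1/2:ℝ)^(m+1) := by
    intro m n
    have h1 : d m n ≤ ∑' j : ℕ, (1/2:ℝ)^(m+2) * (1/2:ℝ)^j := by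
      apply Summable.tsum_le_tsum _ (hd_smj m n)
        ((summable_geometric_of_lt_one (by norm_num) (by norm_num)).mul_left _)
      intro j
      refine (hcs_le (m+j) n).trans (le_of_eq ?_)
      rw [← pow_add]; ring_nf
    rw [tsum_mul_left, tsum_geometric_of_lt_one (by norm_num) (by norm_num)] at h1
    refine h1.trans (le_of_eq ?_)
    rw [show m+2 = (m+1)+1 by omega, pow_add]
    ring
  have hd_pos : ∀ m n, 0 < d m n := by
    intro m n
    refine lt_of_lt_of_le (hpos m n) ?_
    have := Summable.le_tsum (hd_smj m n) 0 (fun j _ => (hpos _ n).le)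
    simpa using this
  have hd_rec : ∀ m n, d m n = cs m n + d (m+1) n := by
    intro m n
    simp only [hddef]
    rw [Summable.tsum_eq_zero_add (hd_smj m n), Nat.add_zero m]
    congr 1
    exact tsum_congr (fun j => by rw [show m+(j+1) = (m+1)+j from by omega])
  have hd_anti_m : ∀ n, Antitone (fun m => d m n) := by
    intro n
    apply antitone_nat_of_succ_le
    intro m
    rw [hd_rec m n]
    have := (hpos m n).le
    linarith
  have hd_anti_n : ∀ m, Antitone (fun n => d m n) := by
    intro m n n' hnn'
    exact Summable.tsum_le_tsum (fun j => hanti (m+j) hnn') (hd_smj m n') (hd_smj m n)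
  have hd_sum_n : ∀ m, Summable (fun n => d m n) := by
    intro m
    have hf : Summable (fun p : ℕ × ℕ => cs (m+p.1) p.2) := by
      rw [summable_prod_of_nonneg (fun p => (hpos _ _).le)]
      refine ⟨fun j => hsm (m+j), ?_⟩
      apply Summable.of_nonneg_of_le (fun j => tsum_nonneg (fun n => (hpos _ n).le))
        (fun j => hts (m+j))
      have : (fun j : ℕ => (1/2:ℝ)^(m+j+2)) = fun j => (1/2:ℝ)^(m+2) * (1/2:ℝ)^j := by
        funext j; rw [← pow_add]; ring_nf
      rw [this]
      exact (summable_geometric_of_lt_one (by norm_num) (by norm_num)).mul_left _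
    have hf' : Summable (fun p : ℕ × ℕ => cs (m+p.2) p.1) := hf.prod_symm
    have := ((summable_prod_of_nonneg (fun p => (hpos _ _).le)).1 hf').2
    exact this
  -- the selector
  have hceil : ∀ x : ℝ, 0 < x → (1/2:ℝ)^(⌈x⁻¹⌉₊) ≤ x := by
    intro x hx
    set N := ⌈x⁻¹⌉₊
    have h1 : x⁻¹ ≤ N := Nat.le_ceil _
    have h2 : (N:ℝ) < 2^N := by exact_mod_cast Nat.lt_two_pow_self (n := N)
    have h3 : x⁻¹ ≤ 2^N := h1.trans h2.le
    have h4 : (1:ℝ) ≤ x * 2^N := by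
      rw [inv_le_iff_one_le_mul₀ hx] at h3  -- maybe wrong name, fix
      linarith [h3]
    have h5 : ((2:ℝ)^N)⁻¹ ≤ x := by
      rw [inv_le_iff_one_le_mul₀ (by positivity)]
      linarith
    calc (1/2:ℝ)^N = ((2:ℝ)^N)⁻¹ := by rw [one_div, inv_pow]
      _ ≤ x := h5
  set g : ℕ → ℝ → ℝ := fun n x => d (⌈x⁻¹⌉₊) n + x * ((1/2:ℝ)^n / 4) with hgdef
  have hg_ge_d : ∀ n x, 0 < x → d (⌈x⁻¹⌉₊) n ≤ g n x := by
    intro n x hx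
    have : 0 < x * ((1/2:ℝ)^n / 4) := by positivity
    simp only [hgdef]
    linarith
  refine ⟨g, ⟨?_, ?_, ?_, ?_, ?_⟩, ?_⟩
  · -- maps Ioo into Ioo
    intro n x hx
    obtain ⟨hx0, hx1⟩ := hx
    constructor
    · have := hd_pos (⌈x⁻¹⌉₊) n
      have : 0 < x * ((1/2:ℝ)^n / 4) := by positivity
      simp only [hgdef]
      have := hd_pos (⌈x⁻¹⌉₊) n
      linarith
    · have h1 : d (⌈x⁻¹⌉₊) n ≤ (1/2:ℝ)^(⌈x⁻¹⌉₊+1) := hd_le _ _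
      have h2 : (1/2:ℝ)^(⌈x⁻¹⌉₊+1) ≤ (1/2:ℝ)^(0+1) := by
        apply pow_le_pow_of_le_one (by norm_num) (by norm_num)
        omega
      have h3 : x * ((1/2:ℝ)^n / 4) ≤ 1 * (1/4) := by
        have hp : (1/2:ℝ)^n ≤ 1 := pow_le_one₀ (by norm_num) (by norm_num)
        have : (1/2:ℝ)^n / 4 ≤ 1/4 := by linarith
        have hge : 0 ≤ (1/2:ℝ)^n / 4 := by positivity
        nlinarith
      simp only [hgdef]
      norm_num at h2 h3 ⊢
      linarith
  · -- strict mono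
    intro n x hx y hy hxy
    have hcx : ⌈y⁻¹⌉₊ ≤ ⌈x⁻¹⌉₊ := by
      apply Nat.ceil_le_ceil
      exact inv_anti₀ hx.1 hxy.le
    have h1 : d (⌈x⁻¹⌉₊) n ≤ d (⌈y⁻¹⌉₊) n := hd_anti_m n hcx
    have h2 : x * ((1/2:ℝ)^n / 4) < y * ((1/2:ℝ)^n / 4) := by
      have : (0:ℝ) < (1/2:ℝ)^n / 4 := by positivity
      nlinarith
    simp only [hgdef]
    linarith
  · -- antitone in n
    intro n x hx
    have h1 : d (⌈x⁻¹⌉₊) (n+1) ≤ d (⌈x⁻¹⌉₊) n := hd_anti_n _ (Nat.le_succ n)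
    have h2 : x * ((1/2:ℝ)^(n+1) / 4) ≤ x * ((1/2:ℝ)^n / 4) := by
      have hp : (1/2:ℝ)^(n+1) ≤ (1/2:ℝ)^n :=
        pow_le_pow_of_le_one (by norm_num) (by norm_num) (Nat.le_succ n)
      have := hx.1
      nlinarith
    simp only [hgdef]
    linarith
  · -- tendsto 0
    intro n
    apply squeeze_zero' (f := fun x => g n x) (g := fun x => 2 * x)
    · filter_upwards [self_mem_nhdsWithin] with x hx
      have hx0 : (0:ℝ) < x := hx
      have := hd_pos (⌈x⁻¹⌉₊) n
      have : 0 ≤ x * ((1/2:ℝ)^n / 4) := by positivity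
      simp only [hgdef]
      have := hd_pos (⌈x⁻¹⌉₊) n
      linarith
    · filter_upwards [self_mem_nhdsWithin] with x hx
      have hx0 : (0:ℝ) < x := hx
      have h1 : d (⌈x⁻¹⌉₊) n ≤ (1/2:ℝ)^(⌈x⁻¹⌉₊+1) := hd_le _ _
      have h2 : (1/2:ℝ)^(⌈x⁻¹⌉₊+1) ≤ (1/2:ℝ)^(⌈x⁻¹⌉₊) :=
        pow_le_pow_of_le_one (by norm_num) (by norm_num) (Nat.le_succ _)
      have h3 : (1/2:ℝ)^(⌈x⁻¹⌉₊) ≤ x := hceil x hx0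
      have h4 : x * ((1/2:ℝ)^n / 4) ≤ x := by
        have hp : (1/2:ℝ)^n ≤ 1 := pow_le_one₀ (by norm_num) (by norm_num)
        nlinarith
      simp only [hgdef]
      linarith
    · have h2x : Filter.Tendsto (fun x : ℝ => 2 * x) (nhds 0) (nhds 0) := by
        have hc : Continuous (fun x : ℝ => 2 * x) := continuous_const.mul continuous_id
        have := hc.tendsto (0:ℝ)
        simpa using this
      exact h2x.mono_left nhdsWithin_le_nhds
  · -- summable
    refine ⟨1, one_pos, fun x hx0 hx1 => ?_⟩
    apply Summable.add (hd_sum_n _)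
    have : (fun n : ℕ => x * ((1/2:ℝ)^n / 4)) = fun n => (x/4) * (1/2:ℝ)^n := by
      funext n; ring
    rw [this]
    exact (summable_geometric_of_lt_one (by norm_num) (by norm_num)).mul_left _
  · -- FnMicroscopic
    intro ε hε0 hε1
    obtain ⟨a, b, hcov, hlen⟩ := hcover (⌈ε⁻¹⌉₊)
    refine ⟨a, b, hcov, fun k => ?_⟩
    have h1 : cs (⌈ε⁻¹⌉₊) k ≤ d (⌈ε⁻¹⌉₊) k := by
      rw [hd_rec]
      have := (hd_pos (⌈ε⁻¹⌉₊ + 1) k)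
      linarith
    exact (hlen k).trans (h1.trans (hg_ge_d k ε hε0))
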